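/- For every n ≥ 1 and every 2-clumped permutation π ∈ S'_{n−1}, both c_1(π) and c_n(π) are 2-clumped, i.e., {c_1(π), c_n(π) : π ∈ S'_{n−1}} ⊆ S'_n. Consequently (together with S'_0 = {ε} and S'_{n−1} = {p(π) : π ∈ S'_n}), the set S'_n of 2-clumped permutations is a zigzag language for every n ≥ 0. -/

import Mathlib

/-!
Shared definitions: permutations in one-line notation as lists of naturals,
deletion `p`, insertion `c_i`, zigzag languages, the Gray code sequence `J(L_n)`,
jumps, minimal jumps, the auxiliary sequences `s_n^π`, Algorithm M,
vincular pattern containment and 2-clumped permutations.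
-/

/-- `S_n`: permutations of `{1,…,n}` in one-line notation, as lists of naturals. -/
def SymmList (n : ℕ) : Set (List ℕ) := {l | List.Perm l (List.range' 1 n)}

/-- The identity permutation `id_n = 1 2 ⋯ n`. -/
def idPerm (n : ℕ) : List ℕ := List.range' 1 n

/-- `p(π)`: delete the largest entry `n = π.length` from the permutation `π ∈ S_n`. -/
def pdel (l : List ℕ) : List ℕ := l.erase l.length

/-- `c_i(π)`: insert the new largest value `π.length + 1` at (1-indexed) position `i`. -/
def cins (i : ℕ) (l : List ℕ) : List ℕ :=
  l.take (i - 1) ++ (l.length + 1) :: l.drop (i - 1)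

/-- Zigzag languages of permutations: `L_0 = {ε}` is a zigzag language, and
`L ⊆ S_{n+1}` is a zigzag language if `p(L)` is a zigzag language and
`c_1(π), c_{n+1}(π) ∈ L` for every `π ∈ p(L)`. -/
inductive IsZigzag : ℕ → Set (List ℕ) → Prop
  | zero : IsZigzag 0 {[]}
  | succ (n : ℕ) (L : Set (List ℕ)) :
      L ⊆ SymmList (n + 1) →
      IsZigzag n (pdel '' L) →
      (∀ l ∈ pdel '' L, cins 1 l ∈ L ∧ cins (n + 1) l ∈ L) →
      IsZigzag (n + 1) L

/-- `→c(π)`: the sequence of those `c_1(π),…,c_n(π)` lying in `L`,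
in increasing order of the insertion position. -/
noncomputable def cSeq (L : Set (List ℕ)) (n : ℕ) (l : List ℕ) : List (List ℕ) :=
  ((List.range' 1 n).map (fun i => cins i l)).filter
    (fun x => @decide (x ∈ L) (Classical.propDecidable _))

/-- The Gray code sequence `J(L_n)` of a language `L ⊆ S_n`:
`J(L_0) = ε`, and `J(L_{n+1})` is obtained from `J(L_n)` (for the language
`p(L)`) by replacing its entries alternately by `←c(π)` (the reverse of
`→c(π)`) and `→c(π)`. -/
noncomputable def Jseq : ℕ → Set (List ℕ) → List (List ℕ)
  | 0, _ => [[]]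
  | (n + 1), L =>
      (((Jseq n (pdel '' L)).mapIdx
        (fun k π => if k % 2 = 0 then (cSeq L (n + 1) π).reverse
                    else cSeq L (n + 1) π)).flatten)

/-- `ρ` is obtained from `π` by a right jump of the value `v` by `d` steps. -/
def RightJump (π ρ : List ℕ) (v d : ℕ) : Prop :=
  0 < d ∧ ∃ A B C : List ℕ, B.length = d ∧ (∀ x ∈ B, x < v) ∧
    π = A ++ v :: (B ++ C) ∧ ρ = A ++ (B ++ v :: C)

/-- `ρ` is obtained from `π` by a left jump of the value `v` by `d` steps. -/
def LeftJump (π ρ : List ℕ) (v d : ℕ) : Prop := RightJump ρ π v d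

/-- A right jump that is minimal with respect to `L`: every right jump of the
same value by fewer steps yields a permutation not in `L`. -/
def MinimalRightJump (L : Set (List ℕ)) (π ρ : List ℕ) (v d : ℕ) : Prop :=
  RightJump π ρ v d ∧ ∀ d' ρ', d' < d → RightJump π ρ' v d' → ρ' ∉ L

/-- A left jump that is minimal with respect to `L`. -/
def MinimalLeftJump (L : Set (List ℕ)) (π ρ : List ℕ) (v d : ℕ) : Prop :=
  LeftJump π ρ v d ∧ ∀ d' ρ', d' < d → LeftJump π ρ' v d' → ρ' ∉ L

/-- The auxiliary sequence `s_n^π` of a permutation `π` occurring in `J(L_n)`,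
as a function of the index `i ∈ {1,…,n}` (value `0` outside this range). -/
noncomputable def sVec : ℕ → Set (List ℕ) → List ℕ → ℕ → ℕ
  | 0, _, _, _ => 0
  | 1, _, _, i => if i = 1 then 1 else 0
  | (n + 2), L, π, i =>
      let L' := pdel '' L
      let π' := pdel π
      let cbar := if ((Jseq (n + 1) L').idxOf π') % 2 = 0
                  then (cSeq L (n + 2) π').reverse else cSeq L (n + 2) π'
      if cbar.getLast? = some π then
        (if i ≤ n then sVec (n + 1) L' π' i
         else if i = n + 1 then n + 1
         else if i = n + 2 then sVec (n + 1) L' π' (n + 1) else 0)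
      else
        (if i ≤ n + 1 then sVec (n + 1) L' π' i
         else if i = n + 2 then n + 2 else 0)

/-- `j` is at the first position of `l`, or the entry immediately left of `j`
in `l` is larger than `j`. -/
def AtLeftTurn (l : List ℕ) (j : ℕ) : Prop :=
  ∃ A B : List ℕ, l = A ++ j :: B ∧ (A = [] ∨ ∃ x, A.getLast? = some x ∧ j < x)

/-- `j` is at the last position of `l`, or the entry immediately right of `j`
in `l` is larger than `j`. -/
def AtRightTurn (l : List ℕ) (j : ℕ) : Prop :=
  ∃ A B : List ℕ, l = A ++ j :: B ∧ (B = [] ∨ ∃ x, B.head? = some x ∧ j < x)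

/-- `j` is not at the first position of `l`, and the entry immediately left of
`j` in `l` is smaller than `j`. -/
def SmallerLeftNeighbor (l : List ℕ) (j : ℕ) : Prop :=
  ∃ A B : List ℕ, ∃ x, l = A ++ j :: B ∧ A.getLast? = some x ∧ x < j

/-- `j` is not at the last position of `l`, and the entry immediately right of
`j` in `l` is smaller than `j`. -/
def SmallerRightNeighbor (l : List ℕ) (j : ℕ) : Prop :=
  ∃ A B : List ℕ, ∃ x, l = A ++ j :: B ∧ B.head? = some x ∧ x < j

/-- A state of Algorithm M: the current permutation `π` and the auxiliary
arrays `o` and `s`; `o j = false` encodes direction `L` (left) and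
`o j = true` encodes `R` (right). -/
structure MState where
  perm : List ℕ
  o : ℕ → Bool
  s : ℕ → ℕ

/-- The initial state of Algorithm M (step M1): `π = id_n`, `o_j = L`, `s_j = j`. -/
def MInit (n : ℕ) : MState := ⟨idPerm n, fun _ => false, fun j => j⟩

/-- One iteration (steps M3–M5) of Algorithm M on a language `L ⊆ S_n`:
with `j := s_n ≠ 1`, the permutation jumps minimally in the direction `o_j`
(step M4), and the arrays `o`, `s` are updated as in step M5. -/
def MStep (L : Set (List ℕ)) (n : ℕ) (σ σ' : MState) : Prop :=
  σ.s n ≠ 1 ∧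
  σ'.perm ∈ L ∧
  ((σ.o (σ.s n) = false ∧ ∃ d, MinimalLeftJump L σ.perm σ'.perm (σ.s n) d) ∨
   (σ.o (σ.s n) = true ∧ ∃ d, MinimalRightJump L σ.perm σ'.perm (σ.s n) d)) ∧
  (((σ.o (σ.s n) = false ∧ AtLeftTurn σ'.perm (σ.s n)) ∨
    (σ.o (σ.s n) = true ∧ AtRightTurn σ'.perm (σ.s n))) →
      σ'.o = Function.update σ.o (σ.s n) (!σ.o (σ.s n)) ∧
      σ'.s = Function.update (Function.update (Function.update σ.s n n) (σ.s n)
               ((Function.update σ.s n n) (σ.s n - 1))) (σ.s n - 1) (σ.s n - 1)) ∧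
  (¬ ((σ.o (σ.s n) = false ∧ AtLeftTurn σ'.perm (σ.s n)) ∨
      (σ.o (σ.s n) = true ∧ AtRightTurn σ'.perm (σ.s n))) →
      σ'.o = σ.o ∧ σ'.s = Function.update σ.s n n)

/-- `π` contains the vincular pattern `pat` whose marked adjacent pair starts
at (0-indexed) position `k` of `pat`. -/
def ContainsVincular (π pat : List ℕ) (k : ℕ) : Prop :=
  ∃ f : ℕ → ℕ, StrictMonoOn f (Set.Iio pat.length) ∧
    (∀ i < pat.length, f i < π.length) ∧
    f (k + 1) = f k + 1 ∧
    (∀ i < pat.length, ∀ j < pat.length,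
      (pat.getD i 0 < pat.getD j 0 ↔ π.getD (f i) 0 < π.getD (f j) 0))

/-- 2-clumped permutations: those avoiding the vincular patterns
`3(51)24`, `3(51)42`, `24(51)3` and `42(51)3`. -/
def TwoClumped (π : List ℕ) : Prop :=
  ¬ ContainsVincular π [3, 5, 1, 2, 4] 1 ∧ ¬ ContainsVincular π [3, 5, 1, 4, 2] 1 ∧
  ¬ ContainsVincular π [2, 4, 5, 1, 3] 2 ∧ ¬ ContainsVincular π [4, 2, 5, 1, 3] 2

/-- `S'_n`: the set of 2-clumped permutations in `S_n`. -/
def SClump (n : ℕ) : Set (List ℕ) := {l ∈ SymmList n | TwoClumped l}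

/-- `B_n`: the permutations obtained from `1` by repeatedly inserting the new
largest value at the first or the last position. -/
def Bset : ℕ → Set (List ℕ)
  | 0 => {[]}
  | 1 => {[1]}
  | (n + 2) => {l | ∃ π ∈ Bset (n + 1), l = cins 1 π ∨ l = cins (n + 2) π}


/-! ### Auxiliary lemmas -/

lemma getD_lt_of_mem_lt {l : List ℕ} {m i : ℕ} (h : ∀ x ∈ l, x < m) (hi : i < l.length) :
    l.getD i 0 < m := by
  rw [List.getD_eq_getElem l 0 hi]
  exact h _ (List.getElem_mem hi)

lemma contains_of_cons {π pat : List ℕ} {m k : ℕ}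
    (hlen : pat.length = 5) (hk : k ≠ 0) (hk5 : k < 5)
    (hmax : ∀ j < 5, j ≠ k → pat.getD j 0 < pat.getD k 0)
    (hm : ∀ x ∈ π, x < m) :
    ContainsVincular (m :: π) pat k → ContainsVincular π pat k := by
  rintro ⟨f, hmono, hbnd, hadj, hiff⟩
  rw [hlen] at hmono hbnd hiff
  simp only [List.length_cons] at hbnd
  have hpos : ∀ i < 5, 1 ≤ f i := by
    intro i hi
    rcases Nat.eq_zero_or_pos (f i) with h0 | h1
    · exfalso
      have hi0 : i = 0 := by
        by_contra hne
        have := hmono (Set.mem_Iio.mpr (show (0:ℕ) < 5 by omega)) (Set.mem_Iio.mpr hi)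
          (Nat.pos_of_ne_zero hne)
        omega
      subst hi0
      have hlt : pat.getD 0 0 < pat.getD k 0 := hmax 0 (by omega) (Ne.symm hk)
      have h2 := (hiff 0 (by omega) k hk5).mp hlt
      have hfk : 1 ≤ f k := by
        have := hmono (Set.mem_Iio.mpr (show (0:ℕ) < 5 by omega))
          (Set.mem_Iio.mpr hk5) (Nat.pos_of_ne_zero hk)
        omega
      rw [h0] at h2
      obtain ⟨t, ht⟩ : ∃ t, f k = t + 1 := ⟨f k - 1, by omega⟩
      rw [ht, List.getD_cons_succ, List.getD_cons_zero] at h2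
      have hmem : π.getD t 0 < m := getD_lt_of_mem_lt hm (by have := hbnd k hk5; omega)
      omega
    · exact h1
  have hent : ∀ i < 5, (m :: π).getD (f i) 0 = π.getD (f i - 1) 0 := by
    intro i hi
    obtain ⟨t, ht⟩ : ∃ t, f i = t + 1 := ⟨f i - 1, by have := hpos i hi; omega⟩
    rw [ht, List.getD_cons_succ]
    simp
  refine ⟨fun i => f i - 1, ?_, ?_, ?_, ?_⟩
  · rw [hlen]
    intro i hi j hj hij
    have h1 := hmono hi hj hij
    have h2 := hpos i (Set.mem_Iio.mp hi)
    have h3 := hpos j (Set.mem_Iio.mp hj)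
    simp only []
    omega
  · rw [hlen]
    intro i hi
    have h1 := hbnd i hi
    have h2 := hpos i hi
    simp only []
    omega
  · have h1 := hpos k hk5
    show f (k+1) - 1 = (f k - 1) + 1
    omega
  · rw [hlen]
    intro i hi j hj
    simp only []
    rw [← hent i hi, ← hent j hj]
    exact hiff i hi j hj

lemma contains_of_concat {π pat : List ℕ} {m k : ℕ}
    (hlen : pat.length = 5) (hk4 : k ≠ 4) (hk5 : k < 5)
    (hmax : ∀ j < 5, j ≠ k → pat.getD j 0 < pat.getD k 0)
    (hm : ∀ x ∈ π, x < m) :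
    ContainsVincular (π ++ [m]) pat k → ContainsVincular π pat k := by
  rintro ⟨f, hmono, hbnd, hadj, hiff⟩
  rw [hlen] at hmono hbnd hiff
  simp only [List.length_append, List.length_singleton] at hbnd
  have hf4 : f 4 < π.length := by
    by_contra hge
    push_neg at hge
    have hf4e : f 4 = π.length := by have := hbnd 4 (by omega); omega
    have hlt : pat.getD 4 0 < pat.getD k 0 := hmax 4 (by omega) (Ne.symm hk4)
    have h2 := (hiff 4 (by omega) k hk5).mp hlt
    have hfk : f k < f 4 := hmono (Set.mem_Iio.mpr hk5) (Set.mem_Iio.mpr (by omega))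
      (by omega)
    rw [hf4e, List.getD_append_right _ _ _ _ (le_refl _), Nat.sub_self,
      List.getD_cons_zero, List.getD_append _ _ _ _ (show f k < π.length by omega)] at h2
    have := getD_lt_of_mem_lt hm (show f k < π.length by omega)
    omega
  have hall : ∀ i < 5, f i < π.length := by
    intro i hi
    rcases Nat.lt_or_ge i 4 with h | h
    · have := hmono (Set.mem_Iio.mpr hi) (Set.mem_Iio.mpr (show (4:ℕ) < 5 by omega)) h
      omega
    · have hi4 : i = 4 := by omega
      subst hi4
      exact hf4
  have hent : ∀ i < 5, (π ++ [m]).getD (f i) 0 = π.getD (f i) 0 := fun i hi =>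
    List.getD_append _ _ _ _ (hall i hi)
  refine ⟨f, ?_, ?_, hadj, ?_⟩
  · rw [hlen]
    exact hmono
  · rw [hlen]
    exact hall
  · rw [hlen]
    intro i hi j hj
    rw [← hent i hi, ← hent j hj]
    exact hiff i hi j hj

lemma contains_insert {A B pat : List ℕ} {v k : ℕ}
    (hlen : pat.length = 5) (hk5 : k + 1 < 5)
    (hmax : ∀ j < 5, j ≠ k → pat.getD j 0 < pat.getD k 0)
    (hv : ∀ x ∈ A ++ B, x < v) :
    ContainsVincular (A ++ B) pat k → ContainsVincular (A ++ v :: B) pat k := by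
  rintro ⟨f, hmono, hbnd, hadj, hiff⟩
  rw [hlen] at hmono hbnd hiff
  have hlAB : (A ++ B).length = A.length + B.length := by simp
  have hlAvB : (A ++ v :: B).length = A.length + B.length + 1 := by
    simp
    omega
  have hva : (A ++ v :: B).getD A.length 0 = v := by
    rw [List.getD_append_right _ _ _ _ (le_refl A.length), Nat.sub_self,
      List.getD_cons_zero]
  have hent : ∀ i, i < (A ++ B).length →
      (A ++ v :: B).getD (if i < A.length then i else i + 1) 0 = (A ++ B).getD i 0 := by
    intro i hi
    by_cases h : i < A.length
    · rw [if_pos h, List.getD_append _ _ _ _ h, List.getD_append _ _ _ _ h]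
    · push_neg at h
      rw [if_neg (by omega), List.getD_append_right _ _ _ _ (show A.length ≤ i + 1 by omega),
        List.getD_append_right _ _ _ _ h,
        show i + 1 - A.length = (i - A.length) + 1 by omega, List.getD_cons_succ]
  by_cases hstr : f k + 1 = A.length
  · -- the marked pair straddles the insertion point: use `v` as the pattern maximum
    have hklt : ∀ i < 5, i < k → f i < A.length := by
      intro i hi hik
      have := hmono (Set.mem_Iio.mpr hi) (Set.mem_Iio.mpr (show k < 5 by omega)) hik
      omega
    have hkgt : ∀ j < 5, k < j → A.length ≤ f j := by
      intro j hj hkj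
      rcases Nat.eq_or_lt_of_le (show k + 1 ≤ j by omega) with h | h
      · rw [← h]
        omega
      · have := hmono (Set.mem_Iio.mpr hk5) (Set.mem_Iio.mpr hj) h
        omega
    refine ⟨fun i => if i = k then A.length else if f i < A.length then f i else f i + 1,
      ?_, ?_, ?_, ?_⟩
    · rw [hlen]
      intro i hi j hj hij
      simp only []
      rcases eq_or_ne k i with rfl | hik
      · rcases eq_or_ne k j with rfl | hjk
        · exact absurd hij (lt_irrefl _)
        · rw [if_pos rfl, if_neg (Ne.symm hjk)]
          have := hkgt j (Set.mem_Iio.mp hj) hij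
          split_ifs <;> omega
      · rcases eq_or_ne k j with rfl | hjk
        · rw [if_neg (Ne.symm hik), if_pos rfl]
          have := hklt i (Set.mem_Iio.mp hi) hij
          split_ifs <;> omega
        · rw [if_neg (Ne.symm hik), if_neg (Ne.symm hjk)]
          have := hmono hi hj hij
          split_ifs <;> omega
    · rw [hlen]
      intro i hi
      have h1 := hbnd i hi
      have h2 := hbnd k (by omega)
      rw [hlAB] at h1 h2
      simp only []
      rw [hlAvB]
      split_ifs <;> omega
    · simp only []
      rw [hadj]
      split_ifs <;> omega
    · rw [hlen]
      intro i hi j hj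
      simp only []
      rcases eq_or_ne k i with rfl | hik
      · rcases eq_or_ne k j with rfl | hjk
        · simp
        · rw [if_pos rfl, if_neg (Ne.symm hjk), hva, hent (f j) (hbnd j hj)]
          have h1 : ¬ pat.getD k 0 < pat.getD j 0 := by
            have := hmax j hj (Ne.symm hjk)
            omega
          have h2 : ¬ v < (A ++ B).getD (f j) 0 := by
            have := getD_lt_of_mem_lt hv (hbnd j hj)
            omega
          exact iff_of_false h1 h2
      · rcases eq_or_ne k j with rfl | hjk
        · rw [if_neg (Ne.symm hik), if_pos rfl, hva, hent (f i) (hbnd i hi)]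
          exact iff_of_true (hmax i hi (Ne.symm hik)) (getD_lt_of_mem_lt hv (hbnd i hi))
        · rw [if_neg (Ne.symm hik), if_neg (Ne.symm hjk), hent (f i) (hbnd i hi), hent (f j) (hbnd j hj)]
          exact hiff i hi j hj
  · -- no straddling: just shift the positions
    refine ⟨fun i => if f i < A.length then f i else f i + 1, ?_, ?_, ?_, ?_⟩
    · rw [hlen]
      intro i hi j hj hij
      have := hmono hi hj hij
      simp only []
      split_ifs <;> omega
    · rw [hlen]
      intro i hi
      have := hbnd i hi
      rw [hlAB] at this
      simp only []
      rw [hlAvB]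
      split_ifs <;> omega
    · simp only []
      rw [hadj]
      split_ifs <;> omega
    · rw [hlen]
      intro i hi j hj
      simp only []
      rw [hent (f i) (hbnd i hi), hent (f j) (hbnd j hj)]
      exact hiff i hi j hj

lemma twoClumped_cons {π : List ℕ} {m : ℕ} (hm : ∀ x ∈ π, x < m)
    (h : TwoClumped π) : TwoClumped (m :: π) := by
  obtain ⟨h1, h2, h3, h4⟩ := h
  exact ⟨fun hc => h1 (contains_of_cons rfl (by omega) (by omega) (by decide) hm hc),
    fun hc => h2 (contains_of_cons rfl (by omega) (by omega) (by decide) hm hc),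
    fun hc => h3 (contains_of_cons rfl (by omega) (by omega) (by decide) hm hc),
    fun hc => h4 (contains_of_cons rfl (by omega) (by omega) (by decide) hm hc)⟩

lemma twoClumped_concat {π : List ℕ} {m : ℕ} (hm : ∀ x ∈ π, x < m)
    (h : TwoClumped π) : TwoClumped (π ++ [m]) := by
  obtain ⟨h1, h2, h3, h4⟩ := h
  exact ⟨fun hc => h1 (contains_of_concat rfl (by omega) (by omega) (by decide) hm hc),
    fun hc => h2 (contains_of_concat rfl (by omega) (by omega) (by decide) hm hc),
    fun hc => h3 (contains_of_concat rfl (by omega) (by omega) (by decide) hm hc),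
    fun hc => h4 (contains_of_concat rfl (by omega) (by omega) (by decide) hm hc)⟩

lemma twoClumped_of_insert {A B : List ℕ} {v : ℕ} (hv : ∀ x ∈ A ++ B, x < v)
    (h : TwoClumped (A ++ v :: B)) : TwoClumped (A ++ B) := by
  obtain ⟨h1, h2, h3, h4⟩ := h
  exact ⟨fun hc => h1 (contains_insert rfl (by omega) (by decide) hv hc),
    fun hc => h2 (contains_insert rfl (by omega) (by decide) hv hc),
    fun hc => h3 (contains_insert rfl (by omega) (by decide) hv hc),
    fun hc => h4 (contains_insert rfl (by omega) (by decide) hv hc)⟩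

lemma symm_length {l : List ℕ} {n : ℕ} (h : l ∈ SymmList n) : l.length = n := by
  have := List.Perm.length_eq h
  simpa using this

lemma symm_mem_lt {l : List ℕ} {n : ℕ} (h : l ∈ SymmList n) : ∀ x ∈ l, x < n + 1 := by
  intro x hx
  have := (List.Perm.mem_iff h).mp hx
  rw [List.mem_range'_1] at this
  omega

lemma symm_nodup {l : List ℕ} {n : ℕ} (h : l ∈ SymmList n) : l.Nodup :=
  (List.Perm.nodup_iff h).mpr (List.nodup_range' (s := 1) (n := n))

lemma cins_one_eq (π : List ℕ) : cins 1 π = (π.length + 1) :: π := by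
  simp [cins]

lemma cins_last_eq (π : List ℕ) : cins (π.length + 1) π = π ++ [π.length + 1] := by
  simp [cins]

lemma cins_one_mem {π : List ℕ} {n : ℕ} (h : π ∈ SymmList n) :
    cins 1 π ∈ SymmList (n + 1) := by
  rw [cins_one_eq, symm_length h]
  show List.Perm ((n + 1) :: π) (List.range' 1 (n + 1))
  rw [List.range'_1_concat, Nat.add_comm 1 n]
  exact (List.Perm.cons _ h).trans (List.perm_append_singleton _ _).symm

lemma cins_last_mem {π : List ℕ} {n : ℕ} (h : π ∈ SymmList n) :
    cins (n + 1) π ∈ SymmList (n + 1) := by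
  have hl := symm_length h
  have he : cins (n + 1) π = π ++ [n + 1] := by
    rw [← hl]
    exact cins_last_eq π
  show List.Perm _ _
  rw [he, List.range'_1_concat, Nat.add_comm 1 n]
  exact h.append (List.Perm.refl _)

lemma pdel_cins_one (π : List ℕ) : pdel (cins 1 π) = π := by
  rw [cins_one_eq, pdel, List.length_cons, List.erase_cons_head]

lemma part1_aux : ∀ n : ℕ, 1 ≤ n → ∀ π ∈ SClump (n - 1),
    cins 1 π ∈ SClump n ∧ cins n π ∈ SClump n := by
  intro n hn π hπ
  obtain ⟨m, rfl⟩ : ∃ m, n = m + 1 := ⟨n - 1, by omega⟩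
  simp only [Nat.add_sub_cancel] at hπ
  obtain ⟨hs, hc⟩ := hπ
  have hl := symm_length hs
  have hm : ∀ x ∈ π, x < π.length + 1 := by
    intro x hx
    have := symm_mem_lt hs x hx
    omega
  constructor
  · refine ⟨cins_one_mem hs, ?_⟩
    rw [cins_one_eq]
    exact twoClumped_cons hm hc
  · refine ⟨cins_last_mem hs, ?_⟩
    have he : cins (m + 1) π = π ++ [π.length + 1] := by
      rw [← hl]
      exact cins_last_eq π
    rw [he]
    exact twoClumped_concat hm hc

lemma not_contains_nil (pat : List ℕ) (k : ℕ) (hp : 0 < pat.length) :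
    ¬ ContainsVincular [] pat k := by
  rintro ⟨f, -, hb, -, -⟩
  have := hb 0 hp
  simp at this

lemma SClump_zero : SClump 0 = {[]} := by
  ext l
  simp only [SClump, SymmList, Set.mem_setOf_eq, Set.mem_singleton_iff]
  constructor
  · rintro ⟨h, -⟩
    simpa using h
  · rintro rfl
    exact ⟨by simp, not_contains_nil _ _ (by simp), not_contains_nil _ _ (by simp),
      not_contains_nil _ _ (by simp), not_contains_nil _ _ (by simp)⟩

lemma pdel_image (n : ℕ) : pdel '' SClump (n + 1) = SClump n := by
  ext l
  constructor
  · rintro ⟨π, ⟨hs, hc⟩, rfl⟩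
    have hl := symm_length hs
    have hmem : n + 1 ∈ π := by
      refine (List.Perm.mem_iff hs).mpr ?_
      rw [List.mem_range'_1]
      omega
    obtain ⟨A, B, hnA, hsplit, herase⟩ := List.exists_erase_eq hmem
    have hpdel : pdel π = A ++ B := by rw [pdel, hl, herase]
    have hnodup : π.Nodup := symm_nodup hs
    have hvlt : ∀ x ∈ A ++ B, x < n + 1 := by
      intro x hx
      rw [← herase, hnodup.mem_erase_iff] at hx
      have := symm_mem_lt hs x hx.2
      omega
    rw [hpdel]
    refine ⟨?_, ?_⟩
    · show List.Perm (A ++ B) (List.range' 1 n)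
      have hre : (List.range' 1 (n + 1)).erase (n + 1) = List.range' 1 n := by
        rw [List.range'_1_concat, Nat.add_comm 1 n,
          List.erase_append_right _ (show (n + 1) ∉ List.range' 1 n by
            rw [List.mem_range'_1]; omega)]
        simp
      have hperm : List.Perm (π.erase (n + 1)) ((List.range' 1 (n + 1)).erase (n + 1)) :=
        List.Perm.erase _ hs
      rw [herase, hre] at hperm
      exact hperm
    · rw [hsplit] at hc
      exact twoClumped_of_insert hvlt hc
  · intro hl
    exact ⟨cins 1 l, (part1_aux (n + 1) (by omega) l (by simpa using hl)).1,
      pdel_cins_one l⟩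

/-- For every `n ≥ 1` and every 2-clumped permutation
`π ∈ S'_{n−1}`, both `c_1(π)` and `c_n(π)` are 2-clumped. Consequently
(together with `S'_0 = {ε}` and `S'_{n−1} = {p(π) : π ∈ S'_n}`), the set `S'_n`
of 2-clumped permutations is a zigzag language for every `n ≥ 0`. -/
theorem SClump_zigzag :
    (∀ n : ℕ, 1 ≤ n → ∀ π ∈ SClump (n - 1), cins 1 π ∈ SClump n ∧ cins n π ∈ SClump n) ∧
    (∀ n : ℕ, IsZigzag n (SClump n)) := by
  refine ⟨part1_aux, ?_⟩
  intro n
  induction n with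
  | zero =>
      rw [SClump_zero]
      exact IsZigzag.zero
  | succ n ih =>
      refine IsZigzag.succ n _ (fun l hl => hl.1) ?_ ?_
      · rw [pdel_image]
        exact ih
      · rw [pdel_image]
        intro l hl
        exact part1_aux (n + 1) (by omega) l (by simpa using hl)
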